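/- Let A ∈ ℝ^{n×n} and S ⊆ ℝ^n be a linear subspace with range(A) ⊆ S and dim S = 1. Then A is D-semistable on S (i.e., AD is semistable on S for every D ∈ 𝒟₊) if and only if a_{ii} ≤ 0 for all i = 1,…,n. -/
import Mathlib


open Matrix Polynomial Filter Topology

noncomputable section

/-- `D ∈ 𝒟₊`: a diagonal matrix with positive diagonal entries. -/
def IsPosDiag {n : ℕ} (D : Matrix (Fin n) (Fin n) ℝ) : Prop :=
  ∃ d : Fin n → ℝ, (∀ i, 0 < d i) ∧ D = Matrix.diagonal d

/-- A real square matrix is stable if every root in `ℂ` of its characteristic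
polynomial has negative real part. -/
def IsStableMat {n : ℕ} (A : Matrix (Fin n) (Fin n) ℝ) : Prop :=
  ∀ z : ℂ, (A.charpoly.map (algebraMap ℝ ℂ)).IsRoot z → z.re < 0

/-- A real square matrix is semistable if every root in `ℂ` of its characteristic
polynomial has non-positive real part. -/
def IsSemistableMat {n : ℕ} (A : Matrix (Fin n) (Fin n) ℝ) : Prop :=
  ∀ z : ℂ, (A.charpoly.map (algebraMap ℝ ℂ)).IsRoot z → z.re ≤ 0

/-- The restriction `A|_S : S → S` of a matrix whose range is contained in `S`. -/
def restrictedMap {n : ℕ} (A : Matrix (Fin n) (Fin n) ℝ) (S : Submodule ℝ (Fin n → ℝ))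
    (h : ∀ v, A.mulVec v ∈ S) : S →ₗ[ℝ] S :=
  A.mulVecLin.restrict (p := S) (q := S) (fun x _ => by simpa using h x)

/-- `A` is stable on `S`: `range A ⊆ S` and every eigenvalue over `ℂ` (root of the
characteristic polynomial) of `A|_S : S → S` has negative real part. -/
def IsStableOn {n : ℕ} (A : Matrix (Fin n) (Fin n) ℝ) (S : Submodule ℝ (Fin n → ℝ)) : Prop :=
  ∃ h : ∀ v, A.mulVec v ∈ S,
    ∀ z : ℂ, (((restrictedMap A S h).charpoly).map (algebraMap ℝ ℂ)).IsRoot z → z.re < 0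

/-- `A` is semistable on `S`: `range A ⊆ S` and every eigenvalue over `ℂ` of
`A|_S : S → S` has non-positive real part. -/
def IsSemistableOn {n : ℕ} (A : Matrix (Fin n) (Fin n) ℝ) (S : Submodule ℝ (Fin n → ℝ)) : Prop :=
  ∃ h : ∀ v, A.mulVec v ∈ S,
    ∀ z : ℂ, (((restrictedMap A S h).charpoly).map (algebraMap ℝ ℂ)).IsRoot z → z.re ≤ 0

/-- `M < 0` on `S`. -/
def NegDefOn {n : ℕ} (M : Matrix (Fin n) (Fin n) ℝ) (S : Submodule ℝ (Fin n → ℝ)) : Prop :=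
  ∀ x ∈ S, x ≠ 0 → x ⬝ᵥ M.mulVec x < 0

/-- `M ≤ 0` on `S`. -/
def NegSemidefOn {n : ℕ} (M : Matrix (Fin n) (Fin n) ℝ) (S : Submodule ℝ (Fin n → ℝ)) : Prop :=
  ∀ x ∈ S, x ⬝ᵥ M.mulVec x ≤ 0

/-- `M > 0` on `S`. -/
def PosDefOn {n : ℕ} (M : Matrix (Fin n) (Fin n) ℝ) (S : Submodule ℝ (Fin n → ℝ)) : Prop :=
  ∀ x ∈ S, x ≠ 0 → 0 < x ⬝ᵥ M.mulVec x

/-- The Laplacian matrix `A_k` of the labeled digraph `(V,E)` with edge labels `k`: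
`(A_k)_{i',i} = k_{i→i'}` if `(i→i') ∈ E`, `(A_k)_{i,i} = -∑_{(i→i')∈E} k_{i→i'}`,
and `0` otherwise (the graph has no self-loops). -/
def laplacian {m : ℕ} (E : Finset (Fin m × Fin m)) (k : Fin m × Fin m → ℝ) :
    Matrix (Fin m) (Fin m) ℝ :=
  fun i' i => (if (i, i') ∈ E then k (i, i') else 0)
    - (if i' = i then ∑ e ∈ E.filter (fun e => e.1 = i), k e else 0)

/-- The incidence matrix `I_E ∈ ℝ^{V×E}`, with column `e_{i'} - e_i` for each edge `(i→i')`. -/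
def incidence {m : ℕ} (E : Finset (Fin m × Fin m)) :
    Matrix (Fin m) {e : Fin m × Fin m // e ∈ E} ℝ :=
  fun i e => (if (e : Fin m × Fin m).2 = i then (1 : ℝ) else 0)
    - (if (e : Fin m × Fin m).1 = i then 1 else 0)

/-- `x^Ỹ ∈ ℝ^V`, defined by `(x^Ỹ)_j = ∏_i x_i ^ (Ỹ)_{ij}` (real exponents). -/
def powVec {n m : ℕ} (x : Fin n → ℝ) (Yt : Matrix (Fin n) (Fin m) ℝ) : Fin m → ℝ :=
  fun j => ∏ i, (x i) ^ (Yt i j)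

/-- The digraph `(V,E)` is weakly reversible: every connected component is strongly
connected, i.e. whenever `a` and `b` are connected by an undirected path, there is a
directed path from `a` to `b`. -/
def WeaklyReversible {m : ℕ} (E : Finset (Fin m × Fin m)) : Prop :=
  ∀ a b : Fin m,
    Relation.ReflTransGen (fun u v => (u, v) ∈ E ∨ (v, u) ∈ E) a b →
    Relation.ReflTransGen (fun u v => (u, v) ∈ E) a b

/-- The stoichiometric subspace `S = range (Y I_E)`. -/
def stoichSubspace {n m : ℕ} (Y : Matrix (Fin n) (Fin m) ℝ) (E : Finset (Fin m × Fin m)) :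
    Submodule ℝ (Fin n → ℝ) :=
  LinearMap.range (Y * incidence E).mulVecLin

/-- The Jacobian matrix `J(x) = Y A_k diag(x^Ỹ) Ỹᵀ diag(x⁻¹)` of `x ↦ Y A_k x^Ỹ`. -/
def jacobianMat {n m : ℕ} (E : Finset (Fin m × Fin m)) (k : Fin m × Fin m → ℝ)
    (Y Yt : Matrix (Fin n) (Fin m) ℝ) (x : Fin n → ℝ) : Matrix (Fin n) (Fin n) ℝ :=
  Y * laplacian E k * Matrix.diagonal (powVec x Yt) * Ytᵀ * Matrix.diagonal (fun i => (x i)⁻¹)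

/-- `C` is (the edge set of) a cycle: `{i_1→i_2, …, i_{r-1}→i_r, i_r→i_1}` with
pairwise distinct vertices `i_1, …, i_r` (and `r ≥ 2`). -/
def IsCycleEdges {m : ℕ} (C : Finset (Fin m × Fin m)) : Prop :=
  ∃ (r : ℕ) (f : Fin (r + 2) → Fin m), Function.Injective f ∧
    C = Finset.image (fun j => (f j, f (j + 1))) Finset.univ

/-- The edge set of the directed `m`-cycle `1 → 2 → ⋯ → m → 1`. -/
def cycleEdges (m : ℕ) [NeZero m] : Finset (Fin m × Fin m) :=
  Finset.image (fun i : Fin m => (i, i + 1)) Finset.univ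

end

lemma key {n : ℕ} (M : Matrix (Fin n) (Fin n) ℝ) (S : Submodule ℝ (Fin n → ℝ))
    (h : ∀ v, M.mulVec v ∈ S) (hdim : Module.finrank ℝ S = 1) :
    (∀ z : ℂ, (((restrictedMap M S h).charpoly).map (algebraMap ℝ ℂ)).IsRoot z → z.re ≤ 0)
    ↔ M.trace ≤ 0 := by
  obtain ⟨u, hu0, hu⟩ := finrank_eq_one_iff'.mp hdim
  -- columns of M are multiples of u
  have hcol : ∀ i : Fin n, ∃ c : ℝ, ∀ j, M j i = c * (u : Fin n → ℝ) j := by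
    intro i
    obtain ⟨c, hc⟩ := hu ⟨M.mulVec (Pi.single i 1), h _⟩
    refine ⟨c, fun j => ?_⟩
    have := congrArg (fun w : S => (w : Fin n → ℝ) j) hc
    simp only [Submodule.coe_smul, Pi.smul_apply, smul_eq_mul] at this
    rw [this]
    simp [Matrix.mulVec, dotProduct, Pi.single_apply]
  choose c hc using hcol
  set g := restrictedMap M S h with hg
  have hgu : g u = M.trace • u := by
    apply Subtype.ext
    funext j
    show M.mulVec (u : Fin n → ℝ) j = M.trace * (u : Fin n → ℝ) j
    simp only [Matrix.mulVec, dotProduct, Matrix.trace, Matrix.diag]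
    rw [Finset.sum_mul]
    congr 1
    funext i
    rw [hc i j, hc i i]; ring
  have hmonic := g.charpoly_monic
  have hdeg : g.charpoly.natDegree = 1 := by
    rw [g.charpoly_natDegree, hdim]
  have hp : g.charpoly = X + C (g.charpoly.coeff 0) := hmonic.eq_X_add_C hdeg
  have hcayley := g.aeval_self_charpoly
  have hc0 : g.charpoly.coeff 0 = -M.trace := by
    rw [hp] at hcayley
    have := congrArg (fun f : Module.End ℝ S => f u) hcayley
    simp only [map_add, aeval_X, aeval_C, LinearMap.add_apply, Module.algebraMap_end_apply,
      LinearMap.zero_apply] at this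
    rw [hgu] at this
    have h2 : (M.trace + g.charpoly.coeff 0) • u = 0 := by
      rw [add_smul]; exact this
    rcases smul_eq_zero.mp h2 with h3 | h3
    · linarith [h3]
    · exact absurd h3 hu0
  constructor
  · intro hroot
    have : ((M.trace : ℂ)).re ≤ 0 := by
      apply hroot
      rw [hp, hc0]
      simp [IsRoot, Polynomial.eval_map]
    simpa using this
  · intro ht z hz
    rw [hp, hc0] at hz
    simp only [IsRoot, Polynomial.map_add, Polynomial.map_X, Polynomial.map_C, eval_add, eval_X,
      eval_C, Polynomial.map_neg] at hz
    have hz' : z = algebraMap ℝ ℂ M.trace := by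
      have h4 : z = -((algebraMap ℝ ℂ) (-M.trace)) := by linear_combination hz
      simpa using h4
    rw [hz']
    simpa using ht


lemma trace_mul_diag {n : ℕ} (A : Matrix (Fin n) (Fin n) ℝ) (d : Fin n → ℝ) :
    (A * Matrix.diagonal d).trace = ∑ j, A j j * d j := by
  simp [Matrix.trace, Matrix.diag, Matrix.mul_diagonal]

theorem stmt18 {n : ℕ} (A : Matrix (Fin n) (Fin n) ℝ) (S : Submodule ℝ (Fin n → ℝ))
    (hA : ∀ v, A.mulVec v ∈ S) (hdim : Module.finrank ℝ S = 1) :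
    (∀ D, IsPosDiag D → IsSemistableOn (A * D) S) ↔ (∀ i, A i i ≤ 0) := by
  have hmem : ∀ (d : Fin n → ℝ) (v : Fin n → ℝ),
      (A * Matrix.diagonal d).mulVec v ∈ S := by
    intro d v
    rw [← Matrix.mulVec_mulVec]
    exact hA _
  constructor
  · intro H i
    have hε : ∀ ε : ℝ, 0 < ε →
        A i i + ε * ∑ j ∈ Finset.univ.erase i, A j j ≤ 0 := by
      intro ε hε
      set d : Fin n → ℝ := fun j => if j = i then 1 else ε with hd
      have hDpos : IsPosDiag (Matrix.diagonal d) :=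
        ⟨d, fun j => by by_cases hj : j = i <;> simp [hd, hj, hε], rfl⟩
      obtain ⟨h', hroot⟩ := H _ hDpos
      have htr := (key (A * Matrix.diagonal d) S h' hdim).mp hroot
      rw [trace_mul_diag] at htr
      rw [← Finset.add_sum_erase _ _ (Finset.mem_univ i)] at htr
      simp only [hd, if_pos rfl, mul_one] at htr
      calc A i i + ε * ∑ j ∈ Finset.univ.erase i, A j j
          = A i i + ∑ j ∈ Finset.univ.erase i, A j j * (if j = i then 1 else ε) := by
            rw [Finset.mul_sum]
            congr 1
            refine Finset.sum_congr rfl fun j hj => ?_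
            rw [if_neg (Finset.ne_of_mem_erase hj)]
            ring
        _ ≤ 0 := htr
    have hlim : Filter.Tendsto
        (fun ε : ℝ => A i i + ε * ∑ j ∈ Finset.univ.erase i, A j j)
        (nhdsWithin 0 (Set.Ioi 0)) (nhds (A i i)) := by
      have : Filter.Tendsto
          (fun ε : ℝ => A i i + ε * ∑ j ∈ Finset.univ.erase i, A j j)
          (nhds 0) (nhds (A i i + 0 * ∑ j ∈ Finset.univ.erase i, A j j)) := by
        exact (continuous_const.add (continuous_id.mul continuous_const)).tendsto 0
      simpa using this.mono_left nhdsWithin_le_nhds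
    exact le_of_tendsto hlim (eventually_nhdsWithin_of_forall fun x hx => hε x hx)
  · intro hdia D hD
    obtain ⟨d, hdpos, rfl⟩ := hD
    refine ⟨hmem d, ?_⟩
    rw [key (A * Matrix.diagonal d) S (hmem d) hdim, trace_mul_diag]
    exact Finset.sum_nonpos fun j _ =>
      mul_nonpos_of_nonpos_of_nonneg (hdia j) (hdpos j).le
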